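/- Let z = (z₁, …, z_d) be a random vector with mutually independent components, where each z_i has a continuous, strictly increasing cumulative distribution function F_i. Let Φ denote the standard normal cumulative distribution function, and let M be any orthogonal d × d matrix. Define h: ℝ^d → ℝ^d by first mapping w_i = Φ⁻¹(F_i(z_i)) componentwise, then setting w' = M w, then mapping back h(z)_i = F_i⁻¹(Φ(w'_i)). Then the random vector h(z) has exactly the same joint distribution as z. In particular, deep latent-variable models with any factorized (unconditional) prior are unidentifiable. -/

import Mathlib

open MeasureTheory ProbabilityTheory Matrix

/-- The standard normal cumulative distribution function `Φ`. -/
noncomputable def stdNormalCdf (t : ℝ) : ℝ := ((gaussianReal 0 1) (Set.Iic t)).toReal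

namespace FPUAux

open Set Filter Topology Function
open scoped ENNReal NNReal

lemma stdNormalCdf_eq_cdf : stdNormalCdf = ⇑(cdf (gaussianReal 0 1)) := by
  funext t; rw [cdf_eq_real]; rfl

lemma stdNormalCdf_continuous : Continuous stdNormalCdf := by
  rw [stdNormalCdf_eq_cdf]
  set f := cdf (gaussianReal 0 1) with hf
  refine continuous_iff_continuousAt.2 fun x => ?_
  rw [(monotone_cdf _).continuousAt_iff_leftLim_eq_rightLim]
  have h0 : (gaussianReal 0 1) {x} = 0 :=
    gaussianReal_absolutelyContinuous 0 one_ne_zero (by simp)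
  have hml : f.measure {x} = ENNReal.ofReal (f x - leftLim f x) := f.measure_singleton x
  rw [measure_cdf, h0] at hml
  have h1 : f x ≤ leftLim f x := by
    by_contra h
    push_neg at h
    rw [eq_comm, ENNReal.ofReal_eq_zero] at hml
    linarith
  have h2 : leftLim f x = f x := le_antisymm (f.mono.leftLim_le le_rfl) h1
  have h3 : rightLim f x = f x := by
    refine rightLim_eq_of_tendsto (h := nhdsGT_neBot x) ?_
    exact (f.right_continuous x).tendsto.mono_left (nhdsWithin_mono x Ioi_subset_Ici_self)
  rw [h2, h3]

lemma stdNormalCdf_strictMono : StrictMono stdNormalCdf := by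
  intro a b hab
  have h1 : gaussianReal 0 1 (Iic a) + gaussianReal 0 1 (Ioc a b) = gaussianReal 0 1 (Iic b) := by
    rw [← measure_union (Iic_disjoint_Ioc le_rfl) measurableSet_Ioc, Iic_union_Ioc_eq_Iic hab.le]
  have h2 : gaussianReal 0 1 (Ioc a b) ≠ 0 := by
    intro h
    have hv := gaussianReal_absolutelyContinuous' 0 one_ne_zero h
    rw [Real.volume_Ioc, ENNReal.ofReal_eq_zero] at hv
    linarith
  refine ENNReal.toReal_lt_toReal (measure_ne_top _ _) (measure_ne_top _ _) |>.2 ?_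
  rw [← h1]
  exact ENNReal.lt_add_right (measure_ne_top _ _) h2

section CdfFacts

variable (μ : Measure ℝ) [IsProbabilityMeasure μ] (F : ℝ → ℝ)
  (hF : ∀ t, F t = (μ (Iic t)).toReal)

include hF

lemma cdf_mem_Ioo (hm : StrictMono F) (t : ℝ) : F t ∈ Ioo (0 : ℝ) 1 := by
  constructor
  · have h1 : (0 : ℝ) ≤ F (t - 1) := by rw [hF]; exact ENNReal.toReal_nonneg
    have h2 := hm (sub_one_lt t)
    linarith
  · have h1 : F (t + 1) ≤ 1 := by
      rw [hF]
      have := ENNReal.toReal_mono ENNReal.one_ne_top (prob_le_one (μ := μ) (s := Iic (t + 1)))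
      simpa using this
    have h2 := hm (lt_add_one t)
    linarith

lemma cdf_eq_cdf : F = ⇑(cdf μ) := by
  funext t; rw [hF, ← measureReal_def, cdf_eq_real]

lemma cdf_surjOn (hc : Continuous F) (hm : StrictMono F) : Ioo (0 : ℝ) 1 ⊆ range F := by
  intro y hy
  have hFc := cdf_eq_cdf μ F hF
  have hbot : Tendsto F atBot (𝓝 0) := by rw [hFc]; exact tendsto_cdf_atBot μ
  have htop : Tendsto F atTop (𝓝 1) := by rw [hFc]; exact tendsto_cdf_atTop μ
  obtain ⟨a, ha⟩ := (hbot.eventually_lt_const hy.1).exists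
  obtain ⟨b, hb⟩ := (htop.eventually_const_lt hy.2).exists
  have hab : a < b := hm.lt_iff_lt.mp (ha.trans hb)
  obtain ⟨z, _, hz⟩ := intermediate_value_Ioo hab.le hc.continuousOn (⟨ha, hb⟩ : y ∈ Ioo (F a) (F b))
  exact ⟨z, hz⟩

lemma cdf_apply_Iic (t : ℝ) : μ (Iic t) = ENNReal.ofReal (F t) := by
  rw [hF, ENNReal.ofReal_toReal (measure_ne_top μ _)]

end CdfFacts

/-- The probability integral transform: `P⁻¹ ∘ F` pushes `μ` forward to `ρ`. -/
lemma measurePreserving_invFun_cdf (μ ρ : Measure ℝ) [IsProbabilityMeasure μ]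
    [IsProbabilityMeasure ρ] (F P : ℝ → ℝ)
    (hF : ∀ t, F t = (μ (Iic t)).toReal) (hP : ∀ t, P t = (ρ (Iic t)).toReal)
    (hFc : Continuous F) (hFm : StrictMono F) (hPc : Continuous P) (hPm : StrictMono P) :
    MeasurePreserving (fun t => Function.invFun P (F t)) μ ρ := by
  have hPG : ∀ z, P (Function.invFun P (F z)) = F z := fun z => by
    obtain ⟨w, hw⟩ := cdf_surjOn ρ P hP hPc hPm (cdf_mem_Ioo μ F hF hFm z)
    exact Function.invFun_eq ⟨w, hw⟩
  have hGm : StrictMono (fun t => Function.invFun P (F t)) := by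
    intro a b hab
    have h := hFm hab
    rw [← hPG a, ← hPG b] at h
    exact hPm.lt_iff_lt.mp h
  refine ⟨hGm.monotone.measurable, ?_⟩
  refine Measure.ext_of_Iic _ ρ fun t => ?_
  rw [Measure.map_apply hGm.monotone.measurable measurableSet_Iic]
  obtain ⟨z₀, hz₀⟩ := cdf_surjOn μ F hF hFc hFm (cdf_mem_Ioo ρ P hP hPm t)
  have hpre : (fun t => Function.invFun P (F t)) ⁻¹' Iic t = Iic z₀ := by
    ext z
    simp only [mem_preimage, mem_Iic]
    constructor
    · intro h
      have h2 := hPm.monotone h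
      rw [hPG z, ← hz₀] at h2
      exact hFm.le_iff_le.mp h2
    · intro h
      have h2 : F z ≤ P t := by rw [← hz₀]; exact hFm.monotone h
      rw [← hPG z] at h2
      exact hPm.le_iff_le.mp h2
  rw [hpre, cdf_apply_Iic μ F hF, hz₀, ← cdf_apply_Iic ρ P hP]

/-- Product of one-variable functions integrated against a product measure. -/
lemma lintegral_pi_prod {n : ℕ} (μ : Fin n → Measure ℝ) [∀ i, SigmaFinite (μ i)]
    (f : Fin n → ℝ → ℝ≥0∞) (hf : ∀ i, Measurable (f i)) :
    ∫⁻ x : Fin n → ℝ, ∏ i, f i (x i) ∂Measure.pi μ = ∏ i, ∫⁻ t, f i t ∂μ i := by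
  induction n with
  | zero => simp
  | succ n ih =>
    have hmeas : Measurable fun x : Fin (n + 1) → ℝ => ∏ i, f i (x i) :=
      Finset.measurable_prod _ fun i _ => (hf i).comp (measurable_pi_apply i)
    rw [← ((measurePreserving_piFinSuccAbove μ 0).symm).lintegral_comp hmeas]
    simp_rw [MeasurableEquiv.piFinSuccAbove_symm_apply, Fin.insertNthEquiv, Equiv.coe_fn_mk,
      Fin.insertNth_zero, Fin.prod_univ_succ, Fin.cons_zero, Fin.cons_succ, Fin.zero_succAbove,
      cast_eq]
    rw [lintegral_prod_mul (f := f 0) (g := fun y : Fin n → ℝ => ∏ x, f x.succ (y x)) (hf 0).aemeasurable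
      (Finset.measurable_prod _ fun i _ =>
        (hf i.succ).comp (measurable_pi_apply i)).aemeasurable,
      ih _ _ fun i => hf i.succ]
  
lemma pi_gaussian_eq (d : ℕ) :
    Measure.pi (fun _ : Fin d => gaussianReal 0 1) =
      (volume : Measure (Fin d → ℝ)).withDensity (fun x => ∏ i, gaussianPDF 0 1 (x i)) := by
  refine Measure.pi_eq fun s hs => ?_
  rw [withDensity_apply _ (MeasurableSet.univ_pi hs)]
  have hind : ∀ x : Fin d → ℝ,
      (Set.univ.pi s).indicator (fun x => ∏ i, gaussianPDF 0 1 (x i)) x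
        = ∏ i, (s i).indicator (gaussianPDF 0 1) (x i) := by
    intro x
    by_cases hx : x ∈ Set.univ.pi s
    · rw [indicator_of_mem hx]
      exact Finset.prod_congr rfl fun i _ => (indicator_of_mem (hx i trivial) _).symm
    · rw [indicator_of_notMem hx]
      rw [mem_univ_pi] at hx
      push_neg at hx
      obtain ⟨i, hi⟩ := hx
      exact (Finset.prod_eq_zero (Finset.mem_univ i) (indicator_of_notMem hi _)).symm
  rw [← lintegral_indicator (MeasurableSet.univ_pi hs)]
  simp_rw [hind]
  rw [volume_pi, lintegral_pi_prod _ _ fun i => (measurable_gaussianPDF 0 1).indicator (hs i)]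
  refine Finset.prod_congr rfl fun i _ => ?_
  rw [lintegral_indicator (hs i), gaussianReal_apply 0 one_ne_zero]

lemma map_mulVec_pi_gaussian (d : ℕ) (M : Matrix (Fin d) (Fin d) ℝ) (hM : Mᵀ * M = 1) :
    Measure.map M.mulVec (Measure.pi fun _ : Fin d => gaussianReal 0 1)
      = Measure.pi fun _ : Fin d => gaussianReal 0 1 := by
  have hMfun : M.mulVec = ⇑(Matrix.toLin' M) := by
    funext x; exact (Matrix.toLin'_apply M x).symm
  have hdet2 : M.det * M.det = 1 := by
    have h := congrArg Matrix.det hM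
    rwa [Matrix.det_mul, Matrix.det_transpose, Matrix.det_one] at h
  have hdet : M.det ≠ 0 := by
    intro h; rw [h, mul_zero] at hdet2; exact zero_ne_one hdet2
  have habs : |M.det| = 1 := by
    rcases mul_self_eq_one_iff.mp hdet2 with h | h <;> simp [h]
  have hmeasT : Measurable M.mulVec := by
    rw [hMfun]; exact (LinearMap.continuous_of_finiteDimensional _).measurable
  have hvol : Measure.map M.mulVec (volume : Measure (Fin d → ℝ)) = volume := by
    rw [hMfun, Real.map_matrix_volume_pi_eq_smul_volume_pi hdet, abs_inv, habs]
    simp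
  have hsum : ∀ x : Fin d → ℝ, ∑ i, M.mulVec x i ^ 2 = ∑ i, x i ^ 2 := by
    intro x
    have h1 : M.mulVec x ⬝ᵥ M.mulVec x = x ⬝ᵥ x := by
      rw [Matrix.dotProduct_mulVec]
      have h2 : Matrix.vecMul (M.mulVec x) M = (Mᵀ * M).mulVec x := by
        rw [← Matrix.mulVec_transpose, Matrix.mulVec_mulVec]
      rw [h2, hM, Matrix.one_mulVec]
    simpa [dotProduct, sq] using h1
  have hG : ∀ x : Fin d → ℝ,
      (∏ i, gaussianPDF 0 1 (M.mulVec x i)) = ∏ i, gaussianPDF 0 1 (x i) := by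
    intro x
    have hprod : ∀ y : Fin d → ℝ, (∏ i, gaussianPDF 0 1 (y i)) =
        ENNReal.ofReal (∏ i, gaussianPDFReal 0 1 (y i)) := fun y => by
      rw [ENNReal.ofReal_prod_of_nonneg (fun i _ => gaussianPDFReal_nonneg 0 1 (y i))]
      rfl
    rw [hprod, hprod]
    congr 1
    simp only [gaussianPDFReal, sub_zero, NNReal.coe_one, mul_one]
    rw [Finset.prod_mul_distrib, Finset.prod_mul_distrib, ← Real.exp_sum, ← Real.exp_sum,
      ← Finset.sum_div, ← Finset.sum_div, Finset.sum_neg_distrib, Finset.sum_neg_distrib, hsum]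
  have hGmeas : Measurable fun y : Fin d → ℝ => ∏ i, gaussianPDF 0 1 (y i) :=
    Finset.measurable_prod _ fun i _ =>
      (measurable_gaussianPDF 0 1).comp (measurable_pi_apply i)
  ext s hs
  rw [Measure.map_apply hmeasT hs, pi_gaussian_eq, withDensity_apply _ (hmeasT hs),
    withDensity_apply _ hs]
  calc ∫⁻ x in M.mulVec ⁻¹' s, ∏ i, gaussianPDF 0 1 (x i) ∂volume
      = ∫⁻ x in M.mulVec ⁻¹' s, ∏ i, gaussianPDF 0 1 (M.mulVec x i) ∂volume :=
        lintegral_congr fun x => (hG x).symm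
    _ = ∫⁻ y in s, ∏ i, gaussianPDF 0 1 (y i) ∂(Measure.map M.mulVec volume) :=
        (setLIntegral_map hs hGmeas hmeasT).symm
    _ = ∫⁻ y in s, ∏ i, gaussianPDF 0 1 (y i) ∂volume := by rw [hvol]

end FPUAux

theorem factorized_prior_unidentifiable
    (d : ℕ) (ν : Fin d → Measure ℝ) [∀ i, IsProbabilityMeasure (ν i)]
    (F : Fin d → ℝ → ℝ)
    (hF : ∀ i t, F i t = ((ν i) (Set.Iic t)).toReal)
    (hFcont : ∀ i, Continuous (F i)) (hFmono : ∀ i, StrictMono (F i))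
    (M : Matrix (Fin d) (Fin d) ℝ) (hM : Mᵀ * M = 1) :
    Measure.map (fun z : Fin d → ℝ => fun i : Fin d =>
        Function.invFun (F i)
          (stdNormalCdf ((M.mulVec fun j : Fin d =>
            Function.invFun stdNormalCdf (F j (z j))) i)))
      (Measure.pi ν) = Measure.pi ν := by
  have hPhi : ∀ t, stdNormalCdf t = ((gaussianReal 0 1) (Set.Iic t)).toReal := fun _ => rfl
  have h1 : MeasurePreserving
      (fun z : Fin d → ℝ => fun i => Function.invFun stdNormalCdf (F i (z i)))
      (Measure.pi ν) (Measure.pi fun _ : Fin d => gaussianReal 0 1) :=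
    MeasureTheory.measurePreserving_pi _ _ fun i =>
      FPUAux.measurePreserving_invFun_cdf (ν i) (gaussianReal 0 1) (F i) stdNormalCdf
        (hF i) hPhi (hFcont i) (hFmono i)
        FPUAux.stdNormalCdf_continuous FPUAux.stdNormalCdf_strictMono
  have hmeasT : Measurable M.mulVec := by
    have hMfun : M.mulVec = ⇑(Matrix.toLin' M) := by
      funext x; exact (Matrix.toLin'_apply M x).symm
    rw [hMfun]; exact (LinearMap.continuous_of_finiteDimensional _).measurable
  have h2 : MeasurePreserving M.mulVec
      (Measure.pi fun _ : Fin d => gaussianReal 0 1)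
      (Measure.pi fun _ : Fin d => gaussianReal 0 1) :=
    ⟨hmeasT, FPUAux.map_mulVec_pi_gaussian d M hM⟩
  have h3 : MeasurePreserving
      (fun w : Fin d → ℝ => fun i => Function.invFun (F i) (stdNormalCdf (w i)))
      (Measure.pi fun _ : Fin d => gaussianReal 0 1) (Measure.pi ν) :=
    MeasureTheory.measurePreserving_pi _ _ fun i =>
      FPUAux.measurePreserving_invFun_cdf (gaussianReal 0 1) (ν i) stdNormalCdf (F i)
        hPhi (hF i) FPUAux.stdNormalCdf_continuous FPUAux.stdNormalCdf_strictMono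
        (hFcont i) (hFmono i)
  exact ((h3.comp h2).comp h1).map_eq
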